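/- Let σ and σ' be strictly convex cones in a finite-dimensional ℚ-vector space V whose intersection σ ∩ σ' is a face of σ and a face of σ'. Then there exists a linear form l : V → ℚ with l ≥ 0 on σ, l ≤ 0 on σ', and σ ∩ l⁻¹(0) = σ' ∩ l⁻¹(0) = σ ∩ σ'. -/

import Mathlib

open Pointwise

/-- The cone generated by a finite family of vectors: all nonnegative
rational linear combinations of the `g i`. -/
def coneGen {V : Type*} [AddCommGroup V] [Module ℚ V] {n : ℕ} (g : Fin n → V) : Set V :=
  {x | ∃ c : Fin n → ℚ, (∀ i, 0 ≤ c i) ∧ x = ∑ i, c i • g i}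

/-- A set is a cone if it is the cone generated by some finite family of vectors. -/
def IsCone {V : Type*} [AddCommGroup V] [Module ℚ V] (C : Set V) : Prop :=
  ∃ (n : ℕ) (g : Fin n → V), C = coneGen g

/-- `F` is a face of the cone `C` if `F = C ∩ l⁻¹(0)` for some linear form `l`
nonnegative on `C`. -/
def IsFaceOf {V : Type*} [AddCommGroup V] [Module ℚ V] (F C : Set V) : Prop :=
  ∃ l : V →ₗ[ℚ] ℚ, (∀ x ∈ C, 0 ≤ l x) ∧ F = C ∩ {x | l x = 0}

/-- A fan: a finite collection of strictly convex cones, closed under taking faces,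
such that the intersection of any two of its cones is a face of each. -/
def IsFan {V : Type*} [AddCommGroup V] [Module ℚ V] (S : Set (Set V)) : Prop :=
  S.Finite ∧
  (∀ C ∈ S, IsCone C ∧ C ∩ (-C) = ({0} : Set V)) ∧
  (∀ C ∈ S, ∀ F : Set V, IsFaceOf F C → F ∈ S) ∧
  (∀ C ∈ S, ∀ C' ∈ S, IsFaceOf (C ∩ C') C ∧ IsFaceOf (C ∩ C') C')

/-- A cone of the collection `S` is maximal if it is not strictly contained in
another cone of `S`. -/
def IsMaximalIn {V : Type*} [AddCommGroup V] [Module ℚ V] (S : Set (Set V)) (C : Set V) : Prop :=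
  C ∈ S ∧ ∀ C' ∈ S, C ⊆ C' → C' = C

/-- A fan is quasi-projective if there is a family of linear forms indexed by its
maximal cones which agree on pairwise intersections and satisfy the strict
inequality condition. -/
def IsQuasiProjectiveFan {V : Type*} [AddCommGroup V] [Module ℚ V] (S : Set (Set V)) : Prop :=
  ∃ l : Set V → (V →ₗ[ℚ] ℚ),
    (∀ C, IsMaximalIn S C → ∀ C', IsMaximalIn S C' → ∀ x ∈ C ∩ C', l C x = l C' x) ∧
    (∀ C, IsMaximalIn S C → ∀ C', IsMaximalIn S C' → C ≠ C' →
      ∀ x ∈ C, x ∉ C' → l C' x < l C x)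

section helpers

variable {V : Type*} [AddCommGroup V] [Module ℚ V]

lemma coneGen_zero_mem {n : ℕ} (g : Fin n → V) : (0:V) ∈ coneGen g :=
  ⟨0, fun _ => le_refl 0, by simp⟩

lemma coneGen_add_mem {n : ℕ} {g : Fin n → V} {x y : V}
    (hx : x ∈ coneGen g) (hy : y ∈ coneGen g) : x + y ∈ coneGen g := by
  obtain ⟨c, hc, rfl⟩ := hx
  obtain ⟨d, hd, rfl⟩ := hy
  exact ⟨c + d, fun i => add_nonneg (hc i) (hd i), by
    simp [add_smul, Finset.sum_add_distrib]⟩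

lemma coneGen_smul_mem {n : ℕ} {g : Fin n → V} {x : V} {a : ℚ}
    (ha : 0 ≤ a) (hx : x ∈ coneGen g) : a • x ∈ coneGen g := by
  obtain ⟨c, hc, rfl⟩ := hx
  exact ⟨a • c, fun i => mul_nonneg ha (hc i), by
    simp [Finset.smul_sum, smul_smul]⟩

lemma nonneg_on_coneGen {n : ℕ} {g : Fin n → V} (l : V →ₗ[ℚ] ℚ)
    (h : ∀ i, 0 ≤ l (g i)) : ∀ x ∈ coneGen g, 0 ≤ l x := by
  rintro x ⟨c, hc, rfl⟩
  rw [map_sum]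
  exact Finset.sum_nonneg fun i _ => by
    rw [map_smul]; exact mul_nonneg (hc i) (h i)

/-- Farkas' lemma over ℚ. -/
theorem farkas {V : Type*} [AddCommGroup V] [Module ℚ V] [FiniteDimensional ℚ V] :
    ∀ (n : ℕ) (g : Fin n → V) (w : V), w ∉ coneGen g →
    ∃ l : V →ₗ[ℚ] ℚ, (∀ i, 0 ≤ l (g i)) ∧ l w < 0 := by
  intro n
  induction n with
  | zero =>
    intro g w hw
    have hw0 : w ≠ 0 := fun h => hw (h ▸ coneGen_zero_mem g)
    have : ¬ (∀ φ : Module.Dual ℚ V, φ w = 0) := by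
      rw [Module.forall_dual_apply_eq_zero_iff]; exact hw0
    push_neg at this
    obtain ⟨φ, hφ⟩ := this
    rcases lt_or_gt_of_ne hφ with h | h
    · exact ⟨φ, fun i => i.elim0, h⟩
    · exact ⟨-φ, fun i => i.elim0, by simpa using h⟩
  | succ n IH =>
    intro g w hw
    set a := g (Fin.last n) with ha
    have hsub : coneGen (g ∘ Fin.castSucc) ⊆ coneGen g := by
      rintro x ⟨c, hc, rfl⟩
      refine ⟨Fin.snoc c 0, ?_, ?_⟩
      · intro i
        refine Fin.lastCases ?_ ?_ i <;> simp [hc]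
      · rw [Fin.sum_univ_castSucc]
        simp
    have hw' : w ∉ coneGen (g ∘ Fin.castSucc) := fun h => hw (hsub h)
    obtain ⟨l, hl, hlw⟩ := IH (g ∘ Fin.castSucc) w hw'
    by_cases hla : 0 ≤ l a
    · refine ⟨l, ?_, hlw⟩
      intro i
      refine Fin.lastCases ?_ ?_ i
      · exact hla
      · intro i; exact hl i
    push_neg at hla
    -- project along a
    set h : Fin n → V := fun i => (-(l a)) • g (Fin.castSucc i) + (l (g (Fin.castSucc i))) • a with hh
    set hw2 : V := (-(l a)) • w + (l w) • a with hhw2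
    have hkey : hw2 ∉ coneGen h := by
      rintro ⟨c, hc, hceq⟩
      apply hw
      have hlane : (0:ℚ) < -(l a) := by linarith
      set d : ℚ := ((∑ i, c i * l (g (Fin.castSucc i))) - l w) / (-(l a)) with hd
      have hdnn : 0 ≤ d := by
        apply div_nonneg _ (le_of_lt hlane)
        have : 0 ≤ ∑ i, c i * l (g (Fin.castSucc i)) :=
          Finset.sum_nonneg fun i _ => mul_nonneg (hc i) (hl i)
        linarith
      refine ⟨Fin.snoc c d, ?_, ?_⟩
      · intro i; refine Fin.lastCases ?_ ?_ i <;> simp [hc, hdnn]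
      · rw [Fin.sum_univ_castSucc]
        simp only [Fin.snoc_castSucc, Fin.snoc_last]
        apply smul_right_injective V (ne_of_gt hlane)
        show (-(l a)) • w = (-(l a)) • (∑ i : Fin n, c i • g (Fin.castSucc i) + d • a)
        rw [smul_add, Finset.smul_sum]
        have expand : ∀ i : Fin n, (-(l a)) • (c i • g (Fin.castSucc i))
            = c i • h i - (c i * l (g (Fin.castSucc i))) • a := by
          intro i
          show (-(l a)) • (c i • g (Fin.castSucc i))
            = c i • ((-(l a)) • g (Fin.castSucc i) + (l (g (Fin.castSucc i))) • a)
              - (c i * l (g (Fin.castSucc i))) • a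
          module
        calc (-(l a)) • w
            = hw2 - (l w) • a := by rw [hhw2]; abel
          _ = (∑ i, c i • h i) - (l w) • a := by rw [hceq]
          _ = (∑ i, ((-(l a)) • (c i • g (Fin.castSucc i)) + (c i * l (g (Fin.castSucc i))) • a)) - l w • a := by
              congr 1
              apply Finset.sum_congr rfl
              intro i _
              rw [expand i]; abel
          _ = (∑ i, (-(l a)) • (c i • g (Fin.castSucc i))) + ((∑ i, c i * l (g (Fin.castSucc i))) - l w) • a := by
              rw [Finset.sum_add_distrib, ← Finset.sum_smul, sub_smul]; abel
          _ = (∑ i, (-(l a)) • (c i • g (Fin.castSucc i))) + (-(l a)) • (d • a) := by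
              congr 1
              rw [smul_smul]
              congr 1
              rw [hd]
              rw [mul_div_assoc']
              rw [mul_div_cancel_left₀ _ (ne_of_gt hlane)]
    obtain ⟨l', hl', hl'w⟩ := IH h hw2 hkey
    set L : V →ₗ[ℚ] ℚ := l' - (l' a / l a) • l with hL
    have hLa : L a = 0 := by
      have hne : l a ≠ 0 := ne_of_lt hla
      rw [hL]; simp only [LinearMap.sub_apply, LinearMap.smul_apply, smul_eq_mul]
      field_simp
      ring
    have hLh : ∀ i, L (h i) = l' (h i) := by
      intro i
      rw [hL]
      simp only [LinearMap.sub_apply, LinearMap.smul_apply, smul_eq_mul, hh]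
      have : l ((-(l a)) • g (Fin.castSucc i) + (l (g (Fin.castSucc i))) • a) = 0 := by
        simp only [map_add, map_smul, smul_eq_mul]; ring
      rw [this]; ring
    have hlane : (0:ℚ) < -(l a) := by linarith
    refine ⟨L, ?_, ?_⟩
    · intro i
      refine Fin.lastCases ?_ ?_ i
      · rw [← ha, hLa]
      · intro i
        have h1 : L (h i) = (-(l a)) * L (g (Fin.castSucc i)) := by
          rw [hh]
          simp only [map_add, map_smul, smul_eq_mul, hLa]
          ring
        have h2 : 0 ≤ L (h i) := (hLh i) ▸ hl' i
        nlinarith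
    · have h1 : L hw2 = (-(l a)) * L w := by
        rw [hhw2]
        simp only [map_add, map_smul, smul_eq_mul, hLa]
        ring
      have hl0 : l hw2 = 0 := by
        rw [hhw2]; simp only [map_add, map_smul, smul_eq_mul]; ring
      have h3 : L hw2 = l' hw2 := by
        rw [hL]; simp only [LinearMap.sub_apply, LinearMap.smul_apply, smul_eq_mul, hl0]; ring
      have h2 : L hw2 < 0 := h3 ▸ hl'w
      nlinarith

end helpers

section main
variable {V : Type*} [AddCommGroup V] [Module ℚ V]

lemma self_mem_coneGen {n : ℕ} (g : Fin n → V) (i : Fin n) : g i ∈ coneGen g :=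
  ⟨fun j => if j = i then 1 else 0, fun j => by dsimp only; split <;> norm_num,
   by simp [ite_smul]⟩

lemma mem_sub_coneGen {n m : ℕ} (g : Fin n → V) (h : Fin m → V) (x : V) :
    x ∈ coneGen (Fin.append g (fun j => -(h j))) ↔
      ∃ s ∈ coneGen g, ∃ t ∈ coneGen h, x = s - t := by
  constructor
  · rintro ⟨c, hc, rfl⟩
    refine ⟨∑ i, c (Fin.castAdd m i) • g i, ⟨_, fun i => hc _, rfl⟩,
      ∑ j, c (Fin.natAdd n j) • h j, ⟨_, fun j => hc _, rfl⟩, ?_⟩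
    rw [Fin.sum_univ_add]
    simp only [Fin.append_left, Fin.append_right, smul_neg, sub_eq_add_neg,
      ← Finset.sum_neg_distrib]
  · rintro ⟨s, ⟨a, ha, rfl⟩, t, ⟨b, hb, rfl⟩, rfl⟩
    refine ⟨Fin.append a b, ?_, ?_⟩
    · intro k
      refine Fin.addCases (fun i => ?_) (fun j => ?_) k
      · simpa using ha i
      · simpa using hb j
    · rw [Fin.sum_univ_add]
      simp only [Fin.append_left, Fin.append_right, smul_neg, sub_eq_add_neg,
        ← Finset.sum_neg_distrib]

theorem exists_separating_linear_form_of_common_face'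
    {V : Type*} [AddCommGroup V] [Module ℚ V] [FiniteDimensional ℚ V]
    (σ σ' : Set V) (hσ : ∃ (n : ℕ) (g : Fin n → V), σ = coneGen g)
    (hσ' : ∃ (n : ℕ) (g : Fin n → V), σ' = coneGen g)
    (hface : ∃ l : V →ₗ[ℚ] ℚ, (∀ x ∈ σ, 0 ≤ l x) ∧ σ ∩ σ' = σ ∩ {x | l x = 0})
    (hface' : ∃ l : V →ₗ[ℚ] ℚ, (∀ x ∈ σ', 0 ≤ l x) ∧ σ ∩ σ' = σ' ∩ {x | l x = 0}) :
    ∃ l : V →ₗ[ℚ] ℚ, (∀ x ∈ σ, 0 ≤ l x) ∧ (∀ x ∈ σ', l x ≤ 0) ∧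
      σ ∩ {x | l x = 0} = σ ∩ σ' ∧ σ' ∩ {x | l x = 0} = σ ∩ σ' := by
  obtain ⟨n, g, rfl⟩ := hσ
  obtain ⟨m, h, rfl⟩ := hσ'
  obtain ⟨l₁, hl₁, hτ₁⟩ := hface
  obtain ⟨l₂, hl₂, hτ₂⟩ := hface'
  set σ := coneGen g
  set σ' := coneGen h
  set G : Fin (n + m) → V := Fin.append g (fun j => -(h j)) with hG
  set γ := coneGen G with hγ
  have hmemγ : ∀ x, x ∈ γ ↔ ∃ s ∈ σ, ∃ t ∈ σ', x = s - t := mem_sub_coneGen g h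
  have hσγ : ∀ s ∈ σ, s ∈ γ := fun s hs =>
    (hmemγ s).2 ⟨s, hs, 0, coneGen_zero_mem h, by simp⟩
  have hσ'γ : ∀ t ∈ σ', -t ∈ γ := fun t ht =>
    (hmemγ (-t)).2 ⟨0, coneGen_zero_mem g, t, ht, by simp⟩
  -- key claims
  have claimg : ∀ i : Fin n, g i ∉ σ' → -(g i) ∉ γ := by
    intro i hgi hmem
    obtain ⟨s, hs, t, ht, heq⟩ := (hmemγ _).1 hmem
    have ht' : t = g i + s := by
      rw [← neg_neg (g i), heq]; abel
    have htτ : t ∈ σ ∩ σ' :=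
      ⟨ht' ▸ coneGen_add_mem (self_mem_coneGen g i) hs, ht⟩
    have hlt : l₁ t = 0 := by rw [hτ₁] at htτ; exact htτ.2
    have hsum : l₁ (g i) + l₁ s = 0 := by
      rw [ht'] at hlt; simpa [map_add] using hlt
    have h1 : 0 ≤ l₁ (g i) := hl₁ _ (self_mem_coneGen g i)
    have h2 : 0 ≤ l₁ s := hl₁ _ hs
    have h3 : l₁ (g i) = 0 := by linarith
    have : g i ∈ σ ∩ σ' := by
      rw [hτ₁]; exact ⟨self_mem_coneGen g i, h3⟩
    exact hgi this.2
  have claimh : ∀ j : Fin m, h j ∉ σ → h j ∉ γ := by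
    intro j hhj hmem
    obtain ⟨s, hs, t, ht, heq⟩ := (hmemγ _).1 hmem
    have hs' : s = h j + t := by rw [heq]; abel
    have hsτ : s ∈ σ ∩ σ' :=
      ⟨hs, hs' ▸ coneGen_add_mem (self_mem_coneGen h j) ht⟩
    have hls : l₂ s = 0 := by rw [hτ₂] at hsτ; exact hsτ.2
    have hsum : l₂ (h j) + l₂ t = 0 := by
      rw [hs'] at hls; simpa [map_add] using hls
    have h1 : 0 ≤ l₂ (h j) := hl₂ _ (self_mem_coneGen h j)
    have h2 : 0 ≤ l₂ t := hl₂ _ ht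
    have h3 : l₂ (h j) = 0 := by linarith
    have : h j ∈ σ ∩ σ' := by
      rw [hτ₂]; exact ⟨self_mem_coneGen h j, h3⟩
    exact hhj this.1
  -- construct the functional
  have hLex : ∀ k : Fin (n + m), ∃ Lk : V →ₗ[ℚ] ℚ,
      (∀ idx, 0 ≤ Lk (G idx)) ∧ (-(G k) ∉ γ → 0 < Lk (G k)) := by
    intro k
    by_cases hk : -(G k) ∈ γ
    · exact ⟨0, by simp, fun hn => absurd hk hn⟩
    · obtain ⟨l, hl, hlw⟩ := farkas _ G (-(G k)) hk
      refine ⟨l, hl, fun _ => ?_⟩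
      rw [map_neg] at hlw; linarith
  choose L hL1 hL2 using hLex
  set l : V →ₗ[ℚ] ℚ := ∑ k, L k with hl
  have hlapp : ∀ x, l x = ∑ k, L k x := by
    intro x; rw [hl, LinearMap.sum_apply]
  have hlG : ∀ idx, 0 ≤ l (G idx) := by
    intro idx; rw [hlapp]
    exact Finset.sum_nonneg fun k _ => hL1 k idx
  have hlγ : ∀ x ∈ γ, 0 ≤ l x := nonneg_on_coneGen l hlG
  have hstrict : ∀ k, -(G k) ∉ γ → 0 < l (G k) := by
    intro k hk
    rw [hlapp]
    exact Finset.sum_pos' (fun k' _ => hL1 k' k) ⟨k, Finset.mem_univ k, hL2 k hk⟩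
  have hlσ : ∀ x ∈ σ, 0 ≤ l x := fun x hx => hlγ x (hσγ x hx)
  have hlσ' : ∀ x ∈ σ', l x ≤ 0 := by
    intro x hx
    have := hlγ (-x) (hσ'γ x hx)
    rw [map_neg] at this; linarith
  have hτker : ∀ x ∈ σ ∩ σ', l x = 0 := by
    intro x hx
    have h1 := hlσ x hx.1
    have h2 := hlσ' x hx.2
    linarith
  refine ⟨l, hlσ, hlσ', ?_, ?_⟩
  · apply Set.Subset.antisymm
    · rintro x ⟨⟨c, hc, rfl⟩, hx0⟩
      simp only [Set.mem_setOf_eq] at hx0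
      have hterm : ∀ i ∈ Finset.univ, (0:ℚ) ≤ c i * l (g i) := by
        intro i _
        have hgnn : (0:ℚ) ≤ l (g i) := by
          have := hlG (Fin.castAdd m i)
          simpa [hG, Fin.append_left] using this
        exact mul_nonneg (hc i) hgnn
      have hzero : ∀ i ∈ Finset.univ, c i * l (g i) = 0 := by
        rw [← Finset.sum_eq_zero_iff_of_nonneg hterm]
        rw [map_sum] at hx0
        simpa [map_smul, smul_eq_mul] using hx0
      have hmemterm : ∀ i ∈ Finset.univ, c i • g i ∈ σ ∩ σ' := by
        intro i _
        by_cases hgi : g i ∈ σ'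
        · exact ⟨coneGen_smul_mem (hc i) (self_mem_coneGen g i),
            coneGen_smul_mem (hc i) hgi⟩
        · have hng := claimg i hgi
          have hpos : 0 < l (g i) := by
            have := hstrict (Fin.castAdd m i) (by simpa [hG, Fin.append_left] using hng)
            simpa [hG, Fin.append_left] using this
          have hci : c i = 0 := by
            rcases mul_eq_zero.1 (hzero i (Finset.mem_univ i)) with h' | h'
            · exact h'
            · exact absurd h' (ne_of_gt hpos)
          rw [hci, zero_smul]
          exact ⟨coneGen_zero_mem g, coneGen_zero_mem h⟩
      refine Finset.sum_induction _ (· ∈ σ ∩ σ')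
        (fun a b ha hb => ⟨coneGen_add_mem ha.1 hb.1, coneGen_add_mem ha.2 hb.2⟩)
        ⟨coneGen_zero_mem g, coneGen_zero_mem h⟩ hmemterm
    · intro x hx
      exact ⟨hx.1, hτker x hx⟩
  · apply Set.Subset.antisymm
    · rintro x ⟨⟨b, hb, rfl⟩, hx0⟩
      simp only [Set.mem_setOf_eq] at hx0
      have hGnat : ∀ j : Fin m, G (Fin.natAdd n j) = -(h j) := by
        intro j; simp [hG, Fin.append_right]
      have hterm : ∀ j ∈ Finset.univ, b j * l (h j) ≤ 0 := by
        intro j _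
        have hnp : l (h j) ≤ 0 := by
          have := hlG (Fin.natAdd n j)
          rw [hGnat j, map_neg] at this
          linarith
        exact mul_nonpos_of_nonneg_of_nonpos (hb j) hnp
      have hzero : ∀ j ∈ Finset.univ, b j * l (h j) = 0 := by
        rw [← Finset.sum_eq_zero_iff_of_nonpos hterm]
        rw [map_sum] at hx0
        simpa [map_smul, smul_eq_mul] using hx0
      have hmemterm : ∀ j ∈ Finset.univ, b j • h j ∈ σ ∩ σ' := by
        intro j _
        by_cases hhj : h j ∈ σ
        · exact ⟨coneGen_smul_mem (hb j) hhj,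
            coneGen_smul_mem (hb j) (self_mem_coneGen h j)⟩
        · have hng := claimh j hhj
          have hlt : l (h j) < 0 := by
            have := hstrict (Fin.natAdd n j) (by rw [hGnat j, neg_neg]; exact hng)
            rw [hGnat j, map_neg] at this
            linarith
          have hbj : b j = 0 := by
            rcases mul_eq_zero.1 (hzero j (Finset.mem_univ j)) with h' | h'
            · exact h'
            · exact absurd h' (ne_of_lt hlt)
          rw [hbj, zero_smul]
          exact ⟨coneGen_zero_mem g, coneGen_zero_mem h⟩
      refine Finset.sum_induction _ (· ∈ σ ∩ σ')
        (fun a b ha hb => ⟨coneGen_add_mem ha.1 hb.1, coneGen_add_mem ha.2 hb.2⟩)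
        ⟨coneGen_zero_mem g, coneGen_zero_mem h⟩ hmemterm
    · intro x hx
      exact ⟨hx.2, hτker x hx⟩

end main

/-- If `σ` and `σ'` are strictly convex cones in a
finite-dimensional `ℚ`-vector space whose intersection is a face of each, then
there is a linear form `l` with `l ≥ 0` on `σ`, `l ≤ 0` on `σ'` and
`σ ∩ l⁻¹(0) = σ' ∩ l⁻¹(0) = σ ∩ σ'`. -/
theorem exists_separating_linear_form_of_common_face
    {V : Type*} [AddCommGroup V] [Module ℚ V] [FiniteDimensional ℚ V]
    (σ σ' : Set V) (hσ : IsCone σ) (hσ' : IsCone σ')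
    (hsc : σ ∩ (-σ) = ({0} : Set V)) (hsc' : σ' ∩ (-σ') = ({0} : Set V))
    (hface : IsFaceOf (σ ∩ σ') σ) (hface' : IsFaceOf (σ ∩ σ') σ') :
    ∃ l : V →ₗ[ℚ] ℚ, (∀ x ∈ σ, 0 ≤ l x) ∧ (∀ x ∈ σ', l x ≤ 0) ∧
      σ ∩ {x | l x = 0} = σ ∩ σ' ∧ σ' ∩ {x | l x = 0} = σ ∩ σ' := by
  exact exists_separating_linear_form_of_common_face' σ σ' hσ hσ' hface hface'
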